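/- arXiv:1907.10881 — 4 statements merged into one kernel-verified Lean document; each statement's English description precedes it below -/
import Mathlib

section
/- Let (u_0, u_1, ..., u_{N-1}) be a sequence of nonzero real numbers with u_0 + u_1 + ... + u_{N-1} = 0 (indices mod N), satisfying for each j either u_j = u_{j-1}²/u_{j-2} or u_j = u_{j-2}. Then consecutive terms u_{j-1}, u_j have opposite signs for all j. -/
theorem increments_alternate_sign (N : ℕ) [NeZero N] (u : ZMod N → ℝ)
    (hne : ∀ j, u j ≠ 0) (hsum : ∑ j : ZMod N, u j = 0)
    (hrec : ∀ j : ZMod N, u j = (u (j - 1)) ^ 2 / u (j - 2) ∨ u j = u (j - 2)) :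
    ∀ j : ZMod N, u (j - 1) * u j < 0 := by
  -- step: sign of consecutive product propagates
  have step : ∀ j : ZMod N, (0 < u (j - 1) * u j ↔ 0 < u (j - 2) * u (j - 1)) := by
    intro j
    have ha2 : 0 < u (j - 1) ^ 2 :=
      lt_of_le_of_ne (sq_nonneg _) (Ne.symm (pow_ne_zero 2 (hne (j - 1))))
    rcases hrec j with h | h
    · rw [h]
      have key : u (j - 1) * (u (j - 1) ^ 2 / u (j - 2)) =
          u (j - 1) ^ 2 * (u (j - 1) / u (j - 2)) := by ring
      rcases (hne (j - 1)).lt_or_gt with ha | ha <;>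
        rcases (hne (j - 2)).lt_or_gt with hb | hb
      · exact iff_of_true (mul_pos_of_neg_of_neg ha (div_neg_of_pos_of_neg ha2 hb))
          (mul_pos_of_neg_of_neg hb ha)
      · exact iff_of_false (asymm (mul_neg_of_neg_of_pos ha (div_pos ha2 hb)))
          (asymm (mul_neg_of_pos_of_neg hb ha))
      · exact iff_of_false (asymm (mul_neg_of_pos_of_neg ha (div_neg_of_pos_of_neg ha2 hb)))
          (asymm (mul_neg_of_neg_of_pos hb ha))
      · exact iff_of_true (mul_pos ha (div_pos ha2 hb)) (mul_pos hb ha)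
    · rw [h, mul_comm]
  have fwd : ∀ j : ZMod N, 0 < u (j - 1) * u j → 0 < u j * u (j + 1) := by
    intro j h
    have h1 : j + 1 - 1 = j := by ring
    have h2 : j + 1 - 2 = j - 1 := by ring
    have := (step (j + 1)).mpr
    rw [h1, h2] at this
    exact this h
  intro j
  by_contra hcon
  push_neg at hcon
  have hQ : 0 < u (j - 1) * u j :=
    lt_of_le_of_ne hcon (Ne.symm (mul_ne_zero (hne _) (hne _)))
  -- propagate to all indices
  have hall : ∀ n : ℕ, 0 < u (j + n - 1) * u (j + n) := by
    intro n
    induction n with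
    | zero => simpa using hQ
    | succ n ih =>
      have := fwd (j + n) ih
      have e1 : (j + (n + 1 : ℕ)) = j + n + 1 := by push_cast; ring
      have e2 : j + n + 1 - 1 = j + n := by ring
      rw [e1, e2]
      exact this
  have hallQ : ∀ k : ZMod N, 0 < u (k - 1) * u k := by
    intro k
    have he : k = j + ((k - j).val : ZMod N) := by
      rw [ZMod.natCast_zmod_val]; ring
    rw [he]; exact hall _
  -- all u have the same sign as u j
  rcases (hne j).lt_or_gt with hj | hj
  · have hneg : ∀ n : ℕ, u (j + n) < 0 := by
      intro n
      induction n with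
      | zero => simpa using hj
      | succ n ih =>
        have h := hallQ (j + n + 1)
        have e2 : j + n + 1 - 1 = j + n := by ring
        rw [e2] at h
        have e1 : (j + (n + 1 : ℕ)) = j + n + 1 := by push_cast; ring
        rw [e1]
        nlinarith
    have hallneg : ∀ k : ZMod N, u k < 0 := by
      intro k
      have he : k = j + ((k - j).val : ZMod N) := by
        rw [ZMod.natCast_zmod_val]; ring
      rw [he]; exact hneg _
    have : ∑ k : ZMod N, u k < 0 :=
      Finset.sum_neg (fun k _ => hallneg k) Finset.univ_nonempty
    linarith
  · have hpos : ∀ n : ℕ, 0 < u (j + n) := by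
      intro n
      induction n with
      | zero => simpa using hj
      | succ n ih =>
        have h := hallQ (j + n + 1)
        have e2 : j + n + 1 - 1 = j + n := by ring
        rw [e2] at h
        have e1 : (j + (n + 1 : ℕ)) = j + n + 1 := by push_cast; ring
        rw [e1]
        nlinarith
    have hallpos : ∀ k : ZMod N, 0 < u k := by
      intro k
      have he : k = j + ((k - j).val : ZMod N) := by
        rw [ZMod.natCast_zmod_val]; ring
      rw [he]; exact hpos _
    have : 0 < ∑ k : ZMod N, u k :=
      Finset.sum_pos (fun k _ => hallpos k) Finset.univ_nonempty
    linarith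
end

section
/- Every nontrivial real quadratic cyclic sequence has even order. Precisely: if φ : ZMod N → ℝ is non-constant and satisfies the QCS equation (γ/2)(2φ(j)-φ(j-1)-φ(j+1))² = (φ(j)-φ(j-1))² + (φ(j)-φ(j+1))² for all j with γ ≠ 2, then N is even. -/
theorem real_qcs_even_order (N : ℕ) (γ : ℝ) (hγ : γ ≠ 2) (φ : ZMod N → ℝ)
    (heq : ∀ j : ZMod N, γ / 2 * (2 * φ j - φ (j - 1) - φ (j + 1)) ^ 2 =
      (φ j - φ (j - 1)) ^ 2 + (φ j - φ (j + 1)) ^ 2)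
    (hnc : ∃ j k : ZMod N, φ j ≠ φ k) :
    Even N := by
  by_contra hodd
  have hN0 : N ≠ 0 := by rintro rfl; exact hodd Even.zero
  haveI : NeZero N := ⟨hN0⟩
  have hOdd : Odd N := Nat.not_even_iff_odd.mp hodd
  obtain ⟨a, ha⟩ : ∃ a : ZMod N → ℝ, ∀ j, a j = φ (j + 1) - φ j :=
    ⟨fun j => φ (j + 1) - φ j, fun j => rfl⟩
  have hR : ∀ j : ZMod N, γ / 2 * (a j - a (j + 1)) ^ 2 = (a j) ^ 2 + (a (j + 1)) ^ 2 := by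
    intro j
    have h := heq (j + 1)
    rw [add_sub_cancel_right] at h
    rw [ha j, ha (j + 1)]
    linear_combination h
  -- key pointwise lemma
  have hprop : ∀ j : ZMod N, a j ≠ 0 → a (j + 1) ≠ 0 := by
    intro j hj hnext
    have h := hR j
    rw [hnext] at h
    have : (γ - 2) * (a j) ^ 2 = 0 := by ring_nf; ring_nf at h; linarith
    rcases mul_eq_zero.mp this with h1 | h2
    · exact hγ (by linarith)
    · exact hj (pow_eq_zero_iff (n := 2) (by norm_num) |>.mp h2)
  -- case: all a j = 0 → constant → contradiction
  by_cases hall : ∀ j : ZMod N, a j = 0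
  · obtain ⟨j, k, hjk⟩ := hnc
    have hnat : ∀ n : ℕ, φ ((n : ZMod N)) = φ 0 := by
      intro n
      induction n with
      | zero => simp
      | succ m ih =>
        have := hall (m : ZMod N)
        rw [ha] at this
        push_cast
        linarith
    have hconst : ∀ j : ZMod N, φ j = φ 0 := by
      intro j
      have : ((j.val : ℕ) : ZMod N) = j := by
        rw [ZMod.natCast_val, ZMod.cast_id]
      rw [← this, hnat]
    exact hjk (by rw [hconst j, hconst k])
  · push_neg at hall
    obtain ⟨j₀, hj₀⟩ := hall
    -- all values along the orbit nonzero
    have hAnz : ∀ n : ℕ, a (j₀ + n) ≠ 0 := by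
      intro n
      induction n with
      | zero => simpa using hj₀
      | succ m ih =>
        have := hprop (j₀ + m) ih
        push_cast
        rw [← add_assoc]
        exact this
    have hallnz : ∀ j : ZMod N, a j ≠ 0 := by
      intro j
      have : j₀ + ((j - j₀).val : ℕ) = j := by
        rw [ZMod.natCast_val, ZMod.cast_id]; ring
      rw [← this]; exact hAnz _
    -- γ > 0
    have hγpos : 0 < γ := by
      by_contra hle
      push_neg at hle
      have h := hR j₀
      have h1 : (0:ℝ) < (a j₀) ^ 2 + (a (j₀ + 1)) ^ 2 :=
        add_pos_of_pos_of_nonneg (by positivity) (sq_nonneg _)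
      have h4 : γ / 2 * (a j₀ - a (j₀ + 1)) ^ 2 ≤ 0 :=
        mul_nonpos_of_nonpos_of_nonneg (by linarith) (sq_nonneg _)
      linarith
    rcases lt_or_gt_of_ne hγ with hlt | hgt
    · -- 0 < γ < 2 : signs alternate
      have hneg : ∀ j : ZMod N, a j * a (j + 1) < 0 := by
        intro j
        have h := hR j
        have h2 : 0 < (a j) ^ 2 := sq_pos_of_ne_zero (hallnz j)
        have h3 : 0 < (a (j + 1)) ^ 2 := sq_pos_of_ne_zero (hallnz (j + 1))
        by_contra hcon
        push_neg at hcon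
        nlinarith [mul_nonneg hγpos.le hcon,
          mul_pos (show (0:ℝ) < 2 - γ by linarith) (add_pos h2 h3)]
      have halt : ∀ n : ℕ, 0 < (-1 : ℝ) ^ n * (a j₀ * a (j₀ + n)) := by
        intro n
        induction n with
        | zero =>
          simp only [Nat.cast_zero, add_zero, pow_zero, one_mul]
          nlinarith [sq_pos_of_ne_zero hj₀]
        | succ m ih =>
          have hm := hneg (j₀ + m)
          have hmnz := hAnz m
          have hstep : ((m+1 : ℕ) : ZMod N) = (m : ZMod N) + 1 := by push_cast; ring
          rw [hstep, ← add_assoc]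
          rw [pow_succ]
          nlinarith [sq_pos_of_ne_zero hmnz]
      have hNcast : ((N : ℕ) : ZMod N) = 0 := ZMod.natCast_self N
      have := halt N
      rw [hNcast, add_zero, Odd.neg_one_pow hOdd] at this
      nlinarith [sq_nonneg (a j₀)]
    · -- γ > 2 : all same sign, contradicts sum = 0
      have hpos : ∀ j : ZMod N, 0 < a j * a (j + 1) := by
        intro j
        have h := hR j
        have h2 := sq_pos_of_ne_zero (hallnz j)
        have h3 := sq_pos_of_ne_zero (hallnz (j+1))
        by_contra hcon
        push_neg at hcon
        nlinarith [mul_nonneg hγpos.le (neg_nonneg.mpr hcon),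
          mul_pos (show (0:ℝ) < γ - 2 by linarith) (add_pos h2 h3)]
      have hsame : ∀ n : ℕ, 0 < a j₀ * a (j₀ + n) := by
        intro n
        induction n with
        | zero =>
          simp only [Nat.cast_zero, add_zero]
          nlinarith [sq_pos_of_ne_zero hj₀]
        | succ m ih =>
          have hm := hpos (j₀ + m)
          have hmnz := hAnz m
          have hstep : ((m+1 : ℕ) : ZMod N) = (m : ZMod N) + 1 := by push_cast; ring
          rw [hstep, ← add_assoc]
          nlinarith [sq_pos_of_ne_zero hmnz]
      have hsamesign : ∀ j : ZMod N, 0 < a j₀ * a j := by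
        intro j
        have : j₀ + ((j - j₀).val : ℕ) = j := by
          rw [ZMod.natCast_val, ZMod.cast_id]; ring
        rw [← this]; exact hsame _
      have hsum : ∑ j : ZMod N, a j = 0 := by
        simp only [ha]
        rw [Finset.sum_sub_distrib]
        have : ∑ j : ZMod N, φ (j + 1) = ∑ j : ZMod N, φ j :=
          Fintype.sum_equiv (Equiv.addRight 1) _ _ (fun j => rfl)
        rw [this, sub_self]
      have hsum2 : 0 < ∑ j : ZMod N, a j₀ * a j :=
        Finset.sum_pos (fun j _ => hsamesign j) ⟨0, Finset.mem_univ 0⟩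
      rw [← Finset.mul_sum, hsum, mul_zero] at hsum2
      exact lt_irrefl 0 hsum2
end

section
/- Every complex QCS with constant γ has all edges of equal length: if φ : ZMod N → ℂ satisfies the QCS equation with constant real γ ≤ 1, γ ≠ 2, and is non-degenerate (consecutive terms distinct), then |φ(j+1) - φ(j)| is independent of j. -/
lemma key_qcs (γ : ℝ) (hγ1 : γ ≤ 1) (hγ2 : γ ≠ 2) (a b : ℂ) (ha : a ≠ 0) (hb : b ≠ 0)
    (h : ((γ:ℂ)/2) * (a - b)^2 = a^2 + b^2) : ‖b‖ = ‖a‖ := by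
  have hr : (γ:ℂ) * (1 - b/a)^2 = 2 * (1 + (b/a)^2) := by
    field_simp
    linear_combination 2 * h
  set r : ℂ := b / a with hrdef
  have e1 := congrArg Complex.re hr
  have e2 := congrArg Complex.im hr
  simp [pow_two, Complex.mul_re, Complex.mul_im, Complex.sub_re, Complex.sub_im,
    Complex.add_re, Complex.add_im, Complex.one_re, Complex.one_im] at e1 e2
  set x : ℝ := r.re
  set y : ℝ := r.im
  have hsq : x^2 + y^2 = 1 := by
    rcases eq_or_ne y 0 with hy | hy
    · rw [hy] at e1
      have h1 : (x+1)^2 ≤ 0 := by nlinarith [sq_nonneg (1-x)]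
      have h2 : x + 1 = 0 := by nlinarith [sq_nonneg (x+1)]
      nlinarith
    · have e2' : x * (γ - 2) = γ := by
        have h0 : y * (x * (γ - 2) - γ) = 0 := by linear_combination e2 / 2
        rcases mul_eq_zero.mp h0 with h' | h'
        · exact absurd h' hy
        · linarith
      have hg : γ - 2 ≠ 0 := sub_ne_zero.mpr hγ2
      have : (γ - 2) * (x^2 + y^2) = (γ - 2) * 1 := by nlinarith [e1, e2']
      exact mul_left_cancel₀ hg this
  have habs : ‖r‖ = 1 := by
    have h1 : ‖r‖ ^ 2 = 1 := by
      rw [Complex.sq_norm, Complex.normSq_apply]; nlinarith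
    have h0 := norm_nonneg r
    nlinarith
  have hb' : b = r * a := by rw [hrdef, div_mul_cancel₀ b ha]
  rw [hb', norm_mul, habs, one_mul]

theorem complex_qcs_equal_edges (N : ℕ) (γ : ℝ) (hγ1 : γ ≤ 1) (hγ2 : γ ≠ 2)
    (φ : ZMod N → ℂ)
    (heq : ∀ j : ZMod N, ((γ : ℂ) / 2) * (2 * φ j - φ (j - 1) - φ (j + 1)) ^ 2 =
      (φ j - φ (j - 1)) ^ 2 + (φ j - φ (j + 1)) ^ 2)
    (hnd : ∀ j : ZMod N, φ (j + 1) ≠ φ j) :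
    ∀ j k : ZMod N, ‖φ (j + 1) - φ j‖ = ‖φ (k + 1) - φ k‖ := by
  set f : ZMod N → ℝ := fun j => ‖φ (j + 1) - φ j‖ with hf
  have step : ∀ j : ZMod N, f j = f (j - 1) := by
    intro j
    have ha : φ j - φ (j - 1) ≠ 0 := by
      have := hnd (j - 1)
      rw [sub_add_cancel] at this
      exact sub_ne_zero.mpr this
    have hb : φ (j + 1) - φ j ≠ 0 := sub_ne_zero.mpr (hnd j)
    have h : ((γ:ℂ)/2) * ((φ j - φ (j-1)) - (φ (j+1) - φ j))^2
        = (φ j - φ (j-1))^2 + (φ (j+1) - φ j)^2 := by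
      linear_combination heq j
    have := key_qcs γ hγ1 hγ2 (φ j - φ (j-1)) (φ (j+1) - φ j) ha hb h
    simp only [hf]
    rw [this, sub_add_cancel]
  have step' : ∀ j : ZMod N, f (j + 1) = f j := by
    intro j
    have := step (j + 1)
    rwa [add_sub_cancel_right] at this
  have key2 : ∀ (n : ℤ) (j : ZMod N), f (j + n) = f j := by
    intro n
    induction n using Int.induction_on with
    | zero => simp
    | succ k ih =>
        intro j
        have h1 : (j + ((k:ℤ)+1 : ℤ)) = (j + (k:ℤ)) + 1 := by push_cast; ring
        rw [h1, step', ih]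
    | pred k ih =>
        intro j
        have h1 : (j + (-(k:ℤ)-1 : ℤ)) + 1 = j + (-(k:ℤ) : ℤ) := by push_cast; ring
        have := step' (j + (-(k:ℤ)-1 : ℤ))
        rw [h1] at this
        rw [← this]
        exact ih j
  intro j k
  obtain ⟨n, hn⟩ := ZMod.intCast_surjective (k - j)
  have := key2 n j
  rw [hn, add_sub_cancel] at this
  exact this.symm
end

section
/- The number of 2-step walks of even length L (with turning angle π/2) from the origin to k + iℓ equals 2·C(b₀+b₂, b₀)·C(b₁+b₃, b₁), where b₀,b₁,b₂,b₃ are the coefficients of the unique defining polynomial; moreover b₁ + b₃ = b₀ + b₂. -/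
open Finset

private lemma zmod4_step : ∀ a b : ZMod 4, a.val % 2 ≠ b.val % 2 → a = b + 1 ∨ a = b - 1 := by
  decide

private lemma zmod4_parity : ∀ a b : ZMod 4, (a = b + 1 ∨ a = b - 1) →
    a.val % 2 = (b.val + 1) % 2 := by decide

private def cnt {n : ℕ} (f : Fin n → Bool) : ℕ := #(univ.filter (fun j => f j = true))

private def posE (L n : ℕ) (hn : L = 2 * n) (r : ℕ) : Fin 2 × Fin n ≃ Fin L where
  toFun p := ⟨2 * p.2.val + (p.1.val + r) % 2, by have := p.1.isLt; have := p.2.isLt; omega⟩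
  invFun i := (⟨(i.val + r) % 2, by omega⟩, ⟨i.val / 2, by have := i.isLt; omega⟩)
  left_inv p := by
    have h1 := p.1.isLt; have h2 := p.2.isLt
    refine Prod.ext (Fin.ext ?_) (Fin.ext ?_) <;> simp <;> omega
  right_inv i := by
    have h1 := i.isLt
    refine Fin.ext ?_
    simp
    omega

private def phiN (r : ℕ) (x y : Bool) (m : ℕ) : ℕ :=
  (m + r) % 2 + 2 * (if (m + r) % 2 = 0 then x.toNat else y.toNat)

private lemma phiN_eq0 (r : ℕ) (x y : Bool) (m : ℕ) (h : (m + r) % 2 = 0) :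
    phiN r x y m = 2 * x.toNat := by simp [phiN, h]

private lemma phiN_eq1 (r : ℕ) (x y : Bool) (m : ℕ) (h : (m + r) % 2 = 1) :
    phiN r x y m = 1 + 2 * y.toNat := by simp [phiN, h]

private lemma phiN_lt (r : ℕ) (x y : Bool) (m : ℕ) : phiN r x y m < 4 := by
  rcases Nat.mod_two_eq_zero_or_one (m + r) with h | h
  · rw [phiN_eq0 _ _ _ _ h]; cases x <;> simp
  · rw [phiN_eq1 _ _ _ _ h]; cases y <;> simp

private lemma phiN_mod (r : ℕ) (x y : Bool) (m : ℕ) : phiN r x y m % 2 = (m + r) % 2 := by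
  rcases Nat.mod_two_eq_zero_or_one (m + r) with h | h
  · rw [phiN_eq0 _ _ _ _ h, h]; cases x <;> simp
  · rw [phiN_eq1 _ _ _ _ h, h]; cases y <;> simp

private def phi (L n : ℕ) (hn : L = 2 * n) (ε : ZMod 2) (f g : Fin n → Bool) :
    Fin L → ZMod 4 :=
  fun i => ((phiN ε.val (f ((posE L n hn ε.val).symm i).2) (g ((posE L n hn ε.val).symm i).2)
      i.val : ℕ) : ZMod 4)

private lemma phi_val (L n : ℕ) (hn : L = 2 * n) (ε : ZMod 2) (f g : Fin n → Bool)
    (i : Fin L) : (phi L n hn ε f g i).val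
      = phiN ε.val (f ((posE L n hn ε.val).symm i).2) (g ((posE L n hn ε.val).symm i).2) i.val :=
  ZMod.val_cast_of_lt (phiN_lt _ _ _ _)

private lemma phi_walk (L n : ℕ) (hn : L = 2 * n) (ε : ZMod 2) (f g : Fin n → Bool) :
    ∀ (j : ℕ) (h : j + 1 < L),
      phi L n hn ε f g ⟨j + 1, h⟩ = phi L n hn ε f g ⟨j, Nat.lt_of_succ_lt h⟩ + 1 ∨
      phi L n hn ε f g ⟨j + 1, h⟩ = phi L n hn ε f g ⟨j, Nat.lt_of_succ_lt h⟩ - 1 := by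
  intro j h
  apply zmod4_step
  rw [phi_val, phi_val, phiN_mod, phiN_mod]
  simp only []
  omega

private lemma I_pow_phiN0 (r m : ℕ) (x y : Bool) (h : (m + r) % 2 = 0) :
    Complex.I ^ (((phiN r x y m : ℕ) : ZMod 4)).val = (if x then -1 else 1) := by
  rw [ZMod.val_cast_of_lt (phiN_lt _ _ _ _), phiN_eq0 _ _ _ _ h]
  cases x <;> norm_num [pow_succ, Complex.I_sq]

private lemma I_pow_phiN1 (r m : ℕ) (x y : Bool) (h : (m + r) % 2 = 1) :
    Complex.I ^ (((phiN r x y m : ℕ) : ZMod 4)).val = (if y then -1 else 1) * Complex.I := by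
  rw [ZMod.val_cast_of_lt (phiN_lt _ _ _ _), phiN_eq1 _ _ _ _ h]
  cases y <;> norm_num [pow_succ, Complex.I_sq]

private lemma sum_sign (n : ℕ) (f : Fin n → Bool) :
    ∑ j : Fin n, (if f j then (-1 : ℂ) else 1) = ((n - 2 * cnt f : ℤ) : ℂ) := by
  have h : ∀ j : Fin n, (if f j then (-1 : ℂ) else 1)
      = 1 - 2 * (if f j then 1 else 0) := by
    intro j; split <;> ring
  rw [Finset.sum_congr rfl (fun j _ => h j), Finset.sum_sub_distrib, Finset.sum_const,
    ← Finset.mul_sum, Finset.sum_boole]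
  simp only [cnt, Finset.card_univ, Fintype.card_fin, mul_one]
  push_cast
  ring

private lemma phi_sum (L n : ℕ) (hn : L = 2 * n) (ε : ZMod 2) (f g : Fin n → Bool) :
    ∑ i : Fin L, Complex.I ^ (phi L n hn ε f g i).val
      = ((n - 2 * cnt f : ℤ) : ℂ) + ((n - 2 * cnt g : ℤ) : ℂ) * Complex.I := by
  have he2 : ε.val < 2 := ZMod.val_lt ε
  rw [← Equiv.sum_comp (posE L n hn ε.val) (fun i => Complex.I ^ (phi L n hn ε f g i).val),
    Fintype.sum_prod_type, Fin.sum_univ_two]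
  have key : ∀ (a : Fin 2) (j : Fin n),
      Complex.I ^ (phi L n hn ε f g (posE L n hn ε.val (a, j))).val
        = Complex.I ^ (((phiN ε.val (f j) (g j)
            (2 * j.val + (a.val + ε.val) % 2) : ℕ) : ZMod 4)).val := by
    intro a j
    simp only [phi, Equiv.symm_apply_apply]
    rfl
  have h0 : ∀ j : Fin n,
      Complex.I ^ (phi L n hn ε f g (posE L n hn ε.val (0, j))).val
        = (if f j then -1 else 1) := by
    intro j
    rw [key 0 j]
    exact I_pow_phiN0 _ _ _ _ (by omega)
  have h1 : ∀ j : Fin n,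
      Complex.I ^ (phi L n hn ε f g (posE L n hn ε.val (1, j))).val
        = (if g j then -1 else 1) * Complex.I := by
    intro j
    rw [key 1 j]
    exact I_pow_phiN1 _ _ _ _ (by omega)
  rw [Finset.sum_congr rfl (fun j _ => h0 j), Finset.sum_congr rfl (fun j _ => h1 j),
    ← Finset.sum_mul, sum_sign, sum_sign]

private lemma card_cnt (n b : ℕ) : Nat.card {f : Fin n → Bool // cnt f = b} = n.choose b := by
  rw [Nat.card_eq_fintype_card]
  have e : {f : Fin n → Bool // cnt f = b} ≃ {s : Finset (Fin n) // #s = b} :=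
    { toFun := fun f => ⟨univ.filter (fun j => f.1 j = true), f.2⟩
      invFun := fun s => ⟨fun j => decide (j ∈ s.1), by
        have : (univ.filter fun j => decide (j ∈ s.1) = true) = s.1 := by
          ext j; simp
        simpa [cnt, this] using s.2⟩
      left_inv := fun f => by
        ext j
        simp
      right_inv := fun s => by
        ext j
        simp }
  rw [Fintype.card_congr e, Fintype.card_finset_len, Fintype.card_fin]

private lemma cx_ext {a b c d : ℤ} (h : (a : ℂ) + (b : ℂ) * Complex.I = (c : ℂ) + (d : ℂ) * Complex.I) :
    a = c ∧ b = d := by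
  have hre := congrArg Complex.re h
  have him := congrArg Complex.im h
  simp at hre him
  exact ⟨by exact_mod_cast hre, by exact_mod_cast him⟩

theorem two_step_walk_count (L : ℕ) (hL : Even L) (hL0 : 0 < L) (k ℓ : ℤ)
    (b0 b1 b2 b3 : ℕ)
    (h0 : 4 * (b0 : ℤ) = L + 2 * k) (h1 : 4 * (b1 : ℤ) = L + 2 * ℓ)
    (h2 : 4 * (b2 : ℤ) = L - 2 * k) (h3 : 4 * (b3 : ℤ) = L - 2 * ℓ) :
    Nat.card {t : Fin L → ZMod 4 //
      (∀ (j : ℕ) (h : j + 1 < L),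
        t ⟨j + 1, h⟩ = t ⟨j, Nat.lt_of_succ_lt h⟩ + 1 ∨
        t ⟨j + 1, h⟩ = t ⟨j, Nat.lt_of_succ_lt h⟩ - 1) ∧
      ∑ i : Fin L, Complex.I ^ (t i).val = (k : ℂ) + (ℓ : ℂ) * Complex.I} =
      2 * (b0 + b2).choose b0 * (b1 + b3).choose b1 ∧
    b1 + b3 = b0 + b2 := by
  obtain ⟨m, hm⟩ := hL
  have hn : L = 2 * m := by omega
  have hb02 : b0 + b2 = m := by omega
  have hb13 : b1 + b3 = m := by omega
  refine ⟨?_, by omega⟩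
  let F : ZMod 2 × ({f : Fin m → Bool // cnt f = b2} × {g : Fin m → Bool // cnt g = b3}) →
      {t : Fin L → ZMod 4 //
      (∀ (j : ℕ) (h : j + 1 < L),
        t ⟨j + 1, h⟩ = t ⟨j, Nat.lt_of_succ_lt h⟩ + 1 ∨
        t ⟨j + 1, h⟩ = t ⟨j, Nat.lt_of_succ_lt h⟩ - 1) ∧
      ∑ i : Fin L, Complex.I ^ (t i).val = (k : ℂ) + (ℓ : ℂ) * Complex.I} := fun p =>
    ⟨phi L m hn p.1 p.2.1.1 p.2.2.1, phi_walk L m hn _ _ _, by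
      rw [phi_sum L m hn p.1 p.2.1.1 p.2.2.1, p.2.1.2, p.2.2.2]
      have e1 : ((m : ℤ) - 2 * b2) = k := by omega
      have e2 : ((m : ℤ) - 2 * b3) = ℓ := by omega
      rw [e1, e2]⟩
  have hF : Function.Bijective F := by
    constructor
    · rintro ⟨ε, ⟨f, hf⟩, ⟨g, hg⟩⟩ ⟨ε', ⟨f', hf'⟩, ⟨g', hg'⟩⟩ hpq
      have h : phi L m hn ε f g = phi L m hn ε' f' g' := congrArg Subtype.val hpq
      have hval : ∀ i : Fin L,
          phiN ε.val (f ((posE L m hn ε.val).symm i).2) (g ((posE L m hn ε.val).symm i).2) i.val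
          = phiN ε'.val (f' ((posE L m hn ε'.val).symm i).2)
              (g' ((posE L m hn ε'.val).symm i).2) i.val := by
        intro i
        have h1 := congrArg ZMod.val (congrFun h i)
        rwa [phi_val, phi_val] at h1
      have he : ε.val < 2 := ZMod.val_lt ε
      have he' : ε'.val < 2 := ZMod.val_lt ε'
      have hee : ε = ε' := by
        have hmq : phiN ε.val (f ((posE L m hn ε.val).symm ⟨0, hL0⟩).2)
            (g ((posE L m hn ε.val).symm ⟨0, hL0⟩).2) (⟨0, hL0⟩ : Fin L).val % 2
            = phiN ε'.val (f' ((posE L m hn ε'.val).symm ⟨0, hL0⟩).2)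
            (g' ((posE L m hn ε'.val).symm ⟨0, hL0⟩).2) (⟨0, hL0⟩ : Fin L).val % 2 := by
          rw [hval ⟨0, hL0⟩]
        rw [phiN_mod, phiN_mod] at hmq
        exact ZMod.val_injective 2 (by omega)
      subst hee
      have hf0 : ∀ j : Fin m, f j = f' j := by
        intro j
        have H := hval (posE L m hn ε.val (0, j))
        simp only [Equiv.symm_apply_apply] at H
        have hv : (posE L m hn ε.val (0, j)).val
            = 2 * j.val + ((0 : Fin 2).val + ε.val) % 2 := rfl
        rw [hv] at H
        have hz : ((0 : Fin 2).val : ℕ) = 0 := rfl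
        rw [hz] at H
        rw [phiN_eq0 _ _ _ _ (by omega), phiN_eq0 _ _ _ _ (by omega)] at H
        cases hfj : f j <;> cases hf'j : f' j <;> simp_all
      have hg0 : ∀ j : Fin m, g j = g' j := by
        intro j
        have H := hval (posE L m hn ε.val (1, j))
        simp only [Equiv.symm_apply_apply] at H
        have hv : (posE L m hn ε.val (1, j)).val
            = 2 * j.val + ((1 : Fin 2).val + ε.val) % 2 := rfl
        rw [hv] at H
        have hz : ((1 : Fin 2).val : ℕ) = 1 := rfl
        rw [hz] at H
        rw [phiN_eq1 _ _ _ _ (by omega), phiN_eq1 _ _ _ _ (by omega)] at H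
        cases hfj : g j <;> cases hf'j : g' j <;> simp_all
      simp only [Prod.mk.injEq, Subtype.mk.injEq]
      exact ⟨trivial, funext hf0, funext hg0⟩
    · rintro ⟨t, hW, hS⟩
      set ε : ZMod 2 := (((t ⟨0, hL0⟩).val : ℕ) : ZMod 2) with hεdef
      have heval : ε.val = (t ⟨0, hL0⟩).val % 2 := ZMod.val_natCast 2 _
      have he2 : ε.val < 2 := ZMod.val_lt ε
      have hpar : ∀ (c : ℕ) (h : c < L), (t ⟨c, h⟩).val % 2 = ((t ⟨0, hL0⟩).val + c) % 2 := by
        intro c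
        induction c with
        | zero =>
          intro h
          have : (⟨0, h⟩ : Fin L) = ⟨0, hL0⟩ := rfl
          rw [this]
          omega
        | succ c ih =>
          intro h
          have hp := zmod4_parity _ _ (hW c h)
          have hih := ih (Nat.lt_of_succ_lt h)
          omega
      set f : Fin m → Bool := fun j => decide (2 ≤ (t (posE L m hn ε.val (0, j))).val) with hfdef
      set g : Fin m → Bool := fun j => decide (2 ≤ (t (posE L m hn ε.val (1, j))).val) with hgdef
      have hphi : phi L m hn ε f g = t := by
        funext i
        have hiv : i.val < L := i.isLt
        have hti : (⟨i.val, i.isLt⟩ : Fin L) = i := rfl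
        have hp := hpar i.val i.isLt
        rw [hti] at hp
        have hv4 : (t i).val < 4 := ZMod.val_lt _
        show ((phiN ε.val (f ((posE L m hn ε.val).symm i).2)
            (g ((posE L m hn ε.val).symm i).2) i.val : ℕ) : ZMod 4) = t i
        have hj2 : ((posE L m hn ε.val).symm i).2 = (⟨i.val / 2, by omega⟩ : Fin m) := rfl
        have hcast : (((t i).val : ℕ) : ZMod 4) = t i := by
          simp [ZMod.natCast_val, ZMod.cast_id]
        rcases Nat.mod_two_eq_zero_or_one (i.val + ε.val) with hpe | hpe
        · have hpos : posE L m hn ε.val (0, ⟨i.val / 2, by omega⟩) = i := by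
            apply Fin.ext
            show 2 * (i.val / 2) + ((0 : Fin 2).val + ε.val) % 2 = i.val
            have hz : ((0 : Fin 2).val : ℕ) = 0 := rfl
            rw [hz]
            omega
          have hfv : f ((posE L m hn ε.val).symm i).2 = decide (2 ≤ (t i).val) := by
            rw [hj2, hfdef]
            simp only []
            rw [hpos]
          rw [hfv, phiN_eq0 _ _ _ _ hpe]
          have hv2 : (t i).val % 2 = 0 := by omega
          have : 2 * (decide (2 ≤ (t i).val)).toNat = (t i).val := by
            by_cases h2 : 2 ≤ (t i).val
            · simp [h2]; omega
            · simp [h2]; omega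
          rw [this, hcast]
        · have hpos : posE L m hn ε.val (1, ⟨i.val / 2, by omega⟩) = i := by
            apply Fin.ext
            show 2 * (i.val / 2) + ((1 : Fin 2).val + ε.val) % 2 = i.val
            have hz : ((1 : Fin 2).val : ℕ) = 1 := rfl
            rw [hz]
            omega
          have hgv : g ((posE L m hn ε.val).symm i).2 = decide (2 ≤ (t i).val) := by
            rw [hj2, hgdef]
            simp only []
            rw [hpos]
          rw [hgv, phiN_eq1 _ _ _ _ hpe]
          have hv2 : (t i).val % 2 = 1 := by omega
          have : 1 + 2 * (decide (2 ≤ (t i).val)).toNat = (t i).val := by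
            by_cases h2 : 2 ≤ (t i).val
            · simp [h2]; omega
            · simp [h2]; omega
          rw [this, hcast]
      have hsum := phi_sum L m hn ε f g
      rw [hphi, hS] at hsum
      obtain ⟨e1, e2⟩ := cx_ext hsum
      have hcf : cnt f = b2 := by omega
      have hcg : cnt g = b3 := by omega
      exact ⟨⟨ε, ⟨f, hcf⟩, ⟨g, hcg⟩⟩, Subtype.ext hphi⟩
  rw [← Nat.card_eq_of_bijective F hF, Nat.card_prod, Nat.card_prod, Nat.card_zmod,
    card_cnt, card_cnt]
  have c1 : (b0 + b2).choose b0 = m.choose b2 := by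
    rw [hb02, show b0 = m - b2 by omega]
    exact Nat.choose_symm (by omega)
  have c2 : (b1 + b3).choose b1 = m.choose b3 := by
    rw [hb13, show b1 = m - b3 by omega]
    exact Nat.choose_symm (by omega)
  rw [c1, c2]
  ring
end
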